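/- arXiv:1003.4396 — 6 statements merged into one kernel-verified Lean document; each statement's English description precedes it below -/
import Mathlib

section
/- Let V be a real vector space, F : V → V linear with F(F x) = −x, let g and T be symmetric hybrid bilinear forms on V, and let S be a trilinear form on V symmetric and hybrid in its first two arguments. Suppose there are linear functionals ρ, σ : V → ℝ such that the condition Ω₂* holds: S(x,y,z) − S(x,z,y) = ρ(z)T(x,y) − ρ(y)T(x,z) + σ(z)g(x,y) − σ(y)g(x,z) for all x, y, z ∈ V. Then S(x,y,z) − S(F x, z, F y) = ρ(z)T(x,y) − ρ(F y)T(F x, z) + σ(z)g(x,y) − σ(F y)g(F x, z) for all x, y, z ∈ V. (Equation (13) in the proof of Theorem 1.) -/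
/-- Equation (13) in the proof of Theorem 1. -/
theorem equation_thirteen
    {V : Type*} [AddCommGroup V] [Module ℝ V]
    (F : V →ₗ[ℝ] V) (hF : ∀ x : V, F (F x) = -x)
    (g T : V →ₗ[ℝ] V →ₗ[ℝ] ℝ)
    (hgsymm : ∀ x y : V, g x y = g y x)
    (hghybrid : ∀ x y : V, g (F x) (F y) = g x y)
    (hTsymm : ∀ x y : V, T x y = T y x)
    (hThybrid : ∀ x y : V, T (F x) (F y) = T x y)
    (S : V →ₗ[ℝ] V →ₗ[ℝ] V →ₗ[ℝ] ℝ)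
    (hSsymm : ∀ x y z : V, S x y z = S y x z)
    (hShybrid : ∀ x y z : V, S (F x) (F y) z = S x y z)
    (ρ σ : V →ₗ[ℝ] ℝ)
    (hΩ2 : ∀ x y z : V, S x y z - S x z y =
      ρ z * T x y - ρ y * T x z + σ z * g x y - σ y * g x z) :
    ∀ x y z : V, S x y z - S (F x) z (F y) =
      ρ z * T x y - ρ (F y) * T (F x) z + σ z * g x y - σ (F y) * g (F x) z := by
  intro x y z
  have h := hΩ2 (F x) (F y) z
  rw [hShybrid, hThybrid, hghybrid] at h
  exact h
end

section
/- Let V be a real vector space, F : V → V linear with F(F x) = −x, let g and T be symmetric hybrid bilinear forms on V, and let S be a trilinear form on V symmetric and hybrid in its first two arguments. Suppose there are linear functionals ρ, σ : V → ℝ such that S(x,y,z) − S(x,z,y) = ρ(z)T(x,y) − ρ(y)T(x,z) + σ(z)g(x,y) − σ(y)g(x,z) for all x, y, z ∈ V. Then the symmetrized identity holds: S(x,y,z) + S(y,z,x) = ρ(z)T(x,y) + ρ(x)T(y,z) + σ(z)g(x,y) + σ(x)g(y,z) for all x, y, z ∈ V. (Equation (14) in the proof of Theorem 1, with the sign of the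 last term corrected.) -/
/-- Equation (14) in the proof of Theorem 1 (with the sign of the last term
corrected). -/
theorem equation_fourteen
    {V : Type*} [AddCommGroup V] [Module ℝ V]
    (F : V →ₗ[ℝ] V) (hF : ∀ x : V, F (F x) = -x)
    (g T : V →ₗ[ℝ] V →ₗ[ℝ] ℝ)
    (hgsymm : ∀ x y : V, g x y = g y x)
    (hghybrid : ∀ x y : V, g (F x) (F y) = g x y)
    (hTsymm : ∀ x y : V, T x y = T y x)
    (hThybrid : ∀ x y : V, T (F x) (F y) = T x y)
    (S : V →ₗ[ℝ] V →ₗ[ℝ] V →ₗ[ℝ] ℝ)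
    (hSsymm : ∀ x y z : V, S x y z = S y x z)
    (hShybrid : ∀ x y z : V, S (F x) (F y) z = S x y z)
    (ρ σ : V →ₗ[ℝ] ℝ)
    (hΩ2 : ∀ x y z : V, S x y z - S x z y =
      ρ z * T x y - ρ y * T x z + σ z * g x y - σ y * g x z) :
    ∀ x y z : V, S x y z + S y z x =
      ρ z * T x y + ρ x * T y z + σ z * g x y + σ x * g y z := by
  -- auxiliary rewriting lemmas
  have hTF : ∀ a b : V, T (F a) b = - T a (F b) := by
    intro a b
    have h := hThybrid a (F b)
    rw [hF, map_neg] at h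
    linarith
  have hgF : ∀ a b : V, g (F a) b = - g a (F b) := by
    intro a b
    have h := hghybrid a (F b)
    rw [hF, map_neg] at h
    linarith
  have hSF : ∀ a b : V, ∀ c : V, S (F a) b c = - S a (F b) c := by
    intro a b c
    have h := hShybrid a (F b) c
    rw [hF] at h
    simp only [map_neg, LinearMap.neg_apply] at h
    linarith
  have hSF2 : ∀ a b c : V, S a (F b) c = - S (F a) b c := by
    intro a b c; rw [hSF]; ring
  intro x y z
  have e1 := hΩ2 (F x) (F y) z
  have e2 := hΩ2 (F y) (F z) x
  have e3 := hΩ2 x (F y) (F z)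
  rw [hShybrid, hSsymm (F x) z, hSF2 z x (F y), hSsymm (F z) x,
    hThybrid, hTF x z, hgF x z, hghybrid] at e1
  rw [hShybrid, hSsymm (F y) x,
    hThybrid, hTF y x, hTsymm y (F x), hTF x y,
    hgF y x, hgsymm y (F x), hgF x y, hghybrid] at e2
  linear_combination e1 + e2 + e3
end

section
/- (Theorem 1, case Ω₂*.) Let V be a real vector space, F : V → V linear with F(F x) = −x, let g and T be symmetric hybrid bilinear forms on V, and let S be a trilinear form on V symmetric and hybrid in its first two arguments. If there are linear functionals ρ, σ : V → ℝ such that the condition Ω₂* holds, namely S(x,y,z) − S(x,z,y) = ρ(z)T(x,y) − ρ(y)T(x,z) + σ(z)g(x,y) − σ(y)g(x,z) for all x, y, z ∈ V, then S(x,y,z) = ρ(z)T(x,y) + σ(z)g(x,y) for all x, y, z ∈ V. (In the Kähler space this says T_{ij,k} = ρ_k T_{ij} + σ_k g_{ij}.) -/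
/-- Theorem 1, case Ω₂*: in a Kähler space, condition Ω₂* forces
`T_{ij,k} = ρ_k T_{ij} + σ_k g_{ij}`. -/
theorem theorem_one_omega_two_star
    {V : Type*} [AddCommGroup V] [Module ℝ V]
    (F : V →ₗ[ℝ] V) (hF : ∀ x : V, F (F x) = -x)
    (g T : V →ₗ[ℝ] V →ₗ[ℝ] ℝ)
    (hgsymm : ∀ x y : V, g x y = g y x)
    (hghybrid : ∀ x y : V, g (F x) (F y) = g x y)
    (hTsymm : ∀ x y : V, T x y = T y x)
    (hThybrid : ∀ x y : V, T (F x) (F y) = T x y)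
    (S : V →ₗ[ℝ] V →ₗ[ℝ] V →ₗ[ℝ] ℝ)
    (hSsymm : ∀ x y z : V, S x y z = S y x z)
    (hShybrid : ∀ x y z : V, S (F x) (F y) z = S x y z)
    (ρ σ : V →ₗ[ℝ] ℝ)
    (hΩ2 : ∀ x y z : V, S x y z - S x z y =
      ρ z * T x y - ρ y * T x z + σ z * g x y - σ y * g x z) :
    ∀ x y z : V, S x y z = ρ z * T x y + σ z * g x y := by
  set A : V → V → V → ℝ := fun a b c => S a b c - ρ c * T a b - σ c * g a b with hA
  have h12 : ∀ a b c, A a b c = A b a c := by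
    intro a b c; simp only [hA, hSsymm a b c, hTsymm a b, hgsymm a b]
  have h23 : ∀ a b c, A a b c = A a c b := by
    intro a b c; have := hΩ2 a b c; simp only [hA]; linarith
  have hhyb : ∀ a b c, A (F a) (F b) c = A a b c := by
    intro a b c; simp only [hA, hShybrid, hThybrid, hghybrid]
  have hneg2 : ∀ a b c, A (-a) (-b) c = A a b c := by
    intro a b c
    simp only [hA, map_neg, LinearMap.neg_apply, neg_neg]
  have key : ∀ a b c, A a b c = 0 := by
    intro x y z
    have e1 : A x y z = - A (y) (F z) (F x) := by
      have c1 : A x y z = A (F x) (F y) z := (hhyb x y z).symm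
      have c2 : A (F x) (F y) z = A (F y) z (F x) := by rw [h12, h23]
      have c3 : A (F y) z (F x) = A (F (F y)) (F z) (F x) := (hhyb (F y) z (F x)).symm
      have c4 : A (F (F y)) (F z) (F x) = - A y (F z) (F x) := by
        rw [hF]
        simp only [hA, map_neg, LinearMap.neg_apply]
        ring
      linarith [c1, c2, c3, c4]
    have e2 : A y (F z) (F x) = A (F z) (F x) y := by rw [h12, h23]
    have e3 : A (F z) (F x) y = A z x y := by
      have := hhyb (F z) (F x) y
      rw [hF, hF] at this
      rw [← this, hneg2]
    have e4 : A z x y = A x y z := by rw [h12 z x y, h23 x z y]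
    linarith [e1, e2, e3, e4]
  intro x y z
  have := key x y z
  simp only [hA] at this
  linarith
end

section
/- (Theorem 1, case Ω₃*.) Let V be a real vector space, F : V → V linear with F(F x) = −x, let g and T be symmetric hybrid bilinear forms on V, and let S be a trilinear form on V symmetric and hybrid in its first two arguments. If there are linear functionals φ, γ, η, χ : V → ℝ such that the condition Ω₃* holds, namely S(x,y,z) = φ(z)T(x,y) + γ(x)T(y,z) + γ(y)T(z,x) + η(z)g(x,y) + χ(x)g(y,z) + χ(y)g(z,x) for all x, y, z ∈ V, then S(x,y,z) = (φ−γ)(z)·T(x,y) + (η−χ)(z)·g(x,y) for all x, y, z ∈ V. -/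
/-- Theorem 1, case Ω₃*: in a Kähler space, condition Ω₃* forces
`T_{ij,k} = (φ-γ)_k T_{ij} + (η-χ)_k g_{ij}`. -/
theorem theorem_one_omega_three_star
    {V : Type*} [AddCommGroup V] [Module ℝ V]
    (F : V →ₗ[ℝ] V) (hF : ∀ x : V, F (F x) = -x)
    (g T : V →ₗ[ℝ] V →ₗ[ℝ] ℝ)
    (hgsymm : ∀ x y : V, g x y = g y x)
    (hghybrid : ∀ x y : V, g (F x) (F y) = g x y)
    (hTsymm : ∀ x y : V, T x y = T y x)
    (hThybrid : ∀ x y : V, T (F x) (F y) = T x y)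
    (S : V →ₗ[ℝ] V →ₗ[ℝ] V →ₗ[ℝ] ℝ)
    (hSsymm : ∀ x y z : V, S x y z = S y x z)
    (hShybrid : ∀ x y z : V, S (F x) (F y) z = S x y z)
    (φ γ η χ : V →ₗ[ℝ] ℝ)
    (hΩ3 : ∀ x y z : V, S x y z =
      φ z * T x y + γ x * T y z + γ y * T z x +
      η z * g x y + χ x * g y z + χ y * g z x) :
    ∀ x y z : V, S x y z = (φ z - γ z) * T x y + (η z - χ z) * g x y := by
  set Qf : V → V → V → ℝ := fun a b c =>
    γ a * T b c + γ b * T a c + γ c * T a b +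
    χ a * g b c + χ b * g a c + χ c * g a b with hQf
  -- Qf is invariant under F in its first two arguments
  have hQhyb : ∀ a b c : V, Qf (F a) (F b) c = Qf a b c := by
    intro a b c
    have key := (hΩ3 (F a) (F b) c).symm.trans ((hShybrid a b c).trans (hΩ3 a b c))
    rw [hThybrid a b, hghybrid a b, hTsymm c (F a), hgsymm c (F a),
        hTsymm c a, hgsymm c a] at key
    simp only [hQf]
    rw [hThybrid a b, hghybrid a b]
    linarith [key]
  -- Qf is fully symmetric (cyclic shift)
  have hperm : ∀ a b c : V, Qf a b c = Qf b c a := by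
    intro a b c
    simp only [hQf]
    rw [hTsymm b a, hTsymm c a, hgsymm c a, hgsymm b a]
    ring
  -- Qf is odd under negating an argument
  have hneg : ∀ a b c : V, Qf a (-b) c = - Qf a b c := by
    intro a b c
    simp only [hQf, map_neg, LinearMap.neg_apply]
    ring
  -- Qf vanishes
  have hQ0 : ∀ a b c : V, Qf a b c = 0 := by
    intro x y z
    have a1 : Qf x y z = Qf z (F x) (F y) := by
      rw [← hQhyb x y z, hperm (F x) (F y) z, hperm (F y) z (F x)]
    have a3 : Qf z (F x) (F y) = Qf (F z) (F (F x)) (F y) := (hQhyb z (F x) (F y)).symm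
    have a4 : Qf (F z) (F (F x)) (F y) = - Qf (F z) x (F y) := by
      rw [hF x]; exact hneg _ _ _
    have a5 : Qf (F z) x (F y) = Qf x (F y) (F z) := hperm _ _ _
    have a7 : Qf x (F y) (F z) = Qf y z x := by
      rw [hperm x (F y) (F z)]; exact hQhyb y z x
    have a8 : Qf y z x = Qf x y z := by rw [hperm y z x, hperm z x y]
    have : Qf x y z = - Qf x y z :=
      a1.trans (a3.trans (a4.trans (by rw [a5, a7, a8])))
    linarith
  intro x y z
  have hq := hQ0 x y z
  have h := hΩ3 x y z
  rw [hTsymm z x, hgsymm z x] at h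
  simp only [hQf] at hq
  linarith [h, hq]
end

section
/- (Theorem 2, case Ω₃.) Let V be a finite-dimensional real vector space, F : V → V linear with F(F x) = −x, let g be a nondegenerate symmetric hybrid bilinear form on V, T a symmetric hybrid bilinear form on V, and S a trilinear form on V symmetric and hybrid in its first two arguments. Assume S satisfies condition Ω₃: there are linear functionals a, b : V → ℝ with S(x,y,z) = a(z)g(x,y) + b(x)g(y,z) + b(y)g(x,z) for all x, y, z ∈ V. Assume moreover the divergence-free condition coming from the Bianchi identity, T_{αi,β} g^{βα} = 0, expressed as follows: for every y ∈ V, the endomorphism M_y : V → V determined by g(M_y x, z) = S(x, y, z) for all x, z ∈ V has trace zero. Then a = 0, b = 0 and S = 0 (the energy-momentum tensor is covariantly constant, T_{ij,k} = 0). -/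
/-- Theorem 2, case Ω₃: in a Kähler space, condition Ω₃ together with the
contracted Bianchi identity (traces of the endomorphisms `M_y` vanish) forces
`a = 0`, `b = 0` and `S = 0`. -/
theorem theorem_two_omega_three
    {V : Type*} [AddCommGroup V] [Module ℝ V] [FiniteDimensional ℝ V]
    (F : V →ₗ[ℝ] V) (hF : ∀ x : V, F (F x) = -x)
    (g T : V →ₗ[ℝ] V →ₗ[ℝ] ℝ)
    (hgsymm : ∀ x y : V, g x y = g y x)
    (hghybrid : ∀ x y : V, g (F x) (F y) = g x y)
    (hgnd : ∀ x : V, (∀ y : V, g x y = 0) → x = 0)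
    (hTsymm : ∀ x y : V, T x y = T y x)
    (hThybrid : ∀ x y : V, T (F x) (F y) = T x y)
    (S : V →ₗ[ℝ] V →ₗ[ℝ] V →ₗ[ℝ] ℝ)
    (hSsymm : ∀ x y z : V, S x y z = S y x z)
    (hShybrid : ∀ x y z : V, S (F x) (F y) z = S x y z)
    (a b : V →ₗ[ℝ] ℝ)
    (hΩ3 : ∀ x y z : V, S x y z = a z * g x y + b x * g y z + b y * g x z)
    (htrace : ∀ (y : V) (M : V →ₗ[ℝ] V),
      (∀ x z : V, g (M x) z = S x y z) → LinearMap.trace ℝ V M = 0) :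
    a = 0 ∧ b = 0 ∧ S = 0 := by
  -- Step 1: b = 0.
  have hb : b = 0 := by
    ext x
    -- b(Fx) • Fx = b(x) • x
    have key : b (F x) • F x = b x • x := by
      apply sub_eq_zero.mp
      apply hgnd
      intro z
      have h1 := hShybrid x x z
      rw [hΩ3 (F x) (F x) z, hΩ3 x x z, hghybrid x x] at h1
      have : b (F x) * g (F x) z = b x * g x z := by linarith
      simp only [map_sub, map_smul, LinearMap.sub_apply, LinearMap.smul_apply,
        smul_eq_mul]
      linarith
    -- apply F to get -b(Fx) • x = b(x) • Fx
    have key2 : -(b (F x) • x) = b x • F x := by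
      have := congrArg F key
      simpa [map_smul, hF, smul_neg] using this
    -- combine: (b x ^ 2 + b (F x) ^ 2) • x = 0
    have key3 : (b x ^ 2 + b (F x) ^ 2) • x = 0 := by
      have h4 : b (F x) • (b x • F x) = b (F x) • -(b (F x) • x) := by rw [key2]
      have h5 : b x • (b (F x) • F x) = b x • (b x • x) := by rw [key]
      rw [smul_comm] at h4
      rw [h5] at h4
      have : b x • b x • x + b (F x) • b (F x) • x = 0 := by
        rw [smul_neg] at h4
        linear_combination (norm := module) h4
      rw [add_smul]
      simpa [pow_two, mul_smul] using this
    rcases eq_or_ne x 0 with rfl | hx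
    · simp
    · have := smul_eq_zero.mp key3
      rcases this with h | h
      · have hb2 : b x ^ 2 = 0 := by nlinarith [sq_nonneg (b x), sq_nonneg (b (F x))]
        simpa using pow_eq_zero_iff (n := 2) (by norm_num) |>.mp hb2
      · exact absurd h hx
  -- Step 2: a = 0 using the trace condition.
  have hgnd' : LinearMap.BilinForm.Nondegenerate g :=
    ⟨fun m hm => hgnd m hm, fun m hm => hgnd m (fun y => by rw [hgsymm]; exact hm y)⟩
  have ha : a = 0 := by
    ext y
    set w : V := (LinearMap.BilinForm.toDual g hgnd').symm a with hw
    have hgw : ∀ z : V, g w z = a z := fun z =>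
      LinearMap.BilinForm.apply_toDual_symm_apply (B := g) (hB := hgnd') a z
    set M : V →ₗ[ℝ] V := dualTensorHom ℝ V V ((g.flip y) ⊗ₜ[ℝ] w) with hM
    have hMapp : ∀ x z : V, g (M x) z = S x y z := by
      intro x z
      rw [hΩ3, hb]
      simp only [hM, dualTensorHom_apply, map_smul, LinearMap.smul_apply,
        smul_eq_mul, LinearMap.zero_apply, zero_mul, add_zero, LinearMap.flip_apply]
      rw [hgw z]; ring
    have := htrace y M hMapp
    rw [hM, LinearMap.trace_eq_contract_apply, contractLeft_apply] at this
    simp only [LinearMap.flip_apply] at this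
    rw [hgw y] at this
    exact this
  refine ⟨ha, hb, ?_⟩
  ext x y z
  rw [hΩ3, ha, hb]
  simp
end

section
/- (Theorem 3: every Kähler space of class Ω₄* belongs to Ω₅*.) Let V be a real vector space, F : V → V linear with F(F x) = −x, let g and T be symmetric hybrid bilinear forms on V, and let S be a trilinear form on V symmetric and hybrid in its first two arguments. Suppose there are linear functionals ρ, σ : V → ℝ such that the condition Ω₄* holds: S(x,y,z) − S(x,z,y) = ρ(z)T(x,y) − ρ(y)T(x,z) + σ(z)g(x,y) − σ(y)g(x,z) + ρ(F z)T(x, F y) − ρ(F y)T(x, F z) + σ(F z)g(x, F y) − σ(F y)g(x, F z) for all x, y, z ∈ V. Then there exist linear functionals φ, γ, η, χ : V → ℝ such that S satisfies condition Ω₅*: S(x,y,z) = φ(z)T(x,y) + γ(x)T(y,z) + γ(y)T(z,x) + η(z)g(x,y) + χ(x)g(y,z) + χ(y)g(z,x) + γ(F x)T(F y, z) + γ(F y)T(z, F x) + χ(F x)g(F y, z) + χ(F y)g(F x, z) for all x, y, z ∈ V. -/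
set_option maxHeartbeats 4000000 in
/-- Theorem 3: every Kähler space of class Ω₄* belongs to Ω₅*. -/
theorem omega_four_star_subset_omega_five_star
    {V : Type*} [AddCommGroup V] [Module ℝ V]
    (F : V →ₗ[ℝ] V) (hF : ∀ x : V, F (F x) = -x)
    (g T : V →ₗ[ℝ] V →ₗ[ℝ] ℝ)
    (hgsymm : ∀ x y : V, g x y = g y x)
    (hghybrid : ∀ x y : V, g (F x) (F y) = g x y)
    (hTsymm : ∀ x y : V, T x y = T y x)
    (hThybrid : ∀ x y : V, T (F x) (F y) = T x y)
    (S : V →ₗ[ℝ] V →ₗ[ℝ] V →ₗ[ℝ] ℝ)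
    (hSsymm : ∀ x y z : V, S x y z = S y x z)
    (hShybrid : ∀ x y z : V, S (F x) (F y) z = S x y z)
    (ρ σ : V →ₗ[ℝ] ℝ)
    (hΩ4 : ∀ x y z : V, S x y z - S x z y =
      ρ z * T x y - ρ y * T x z + σ z * g x y - σ y * g x z +
      ρ (F z) * T x (F y) - ρ (F y) * T x (F z) +
      σ (F z) * g x (F y) - σ (F y) * g x (F z)) :
    ∃ φ γ η χ : V →ₗ[ℝ] ℝ, ∀ x y z : V, S x y z =
      φ z * T x y + γ x * T y z + γ y * T z x +
      η z * g x y + χ x * g y z + χ y * g z x +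
      γ (F x) * T (F y) z + γ (F y) * T z (F x) +
      χ (F x) * g (F y) z + χ (F y) * g (F x) z := by
  refine ⟨(4/3 : ℝ) • ρ, (1/3 : ℝ) • ρ, (4/3 : ℝ) • σ, (1/3 : ℝ) • σ, fun x y z => ?_⟩
  have h0 := hΩ4 x y z
  have h1 := hSsymm x y z
  have h2 := hΩ4 x (F y) (F z)
  have h3 := hSsymm x (F y) (F z)
  have h4 := hShybrid x (F y) (F z)
  have h5 := hΩ4 (F x) y (F z)
  have h6 := hΩ4 (F x) (F y) z
  have h7 := hSsymm (F x) (F y) z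
  have h8 := hSsymm x z y
  have h9 := hShybrid x z y
  have h10 := hSsymm x (F z) (F y)
  have h11 := hSsymm (F x) z (F y)
  have h12 := hΩ4 y x z
  have h13 := hΩ4 (F y) x (F z)
  have h14 := hΩ4 (F y) (F x) z
  have h15 := hSsymm y z x
  have h16 := hShybrid y z x
  have h17 := hSsymm (F y) z (F x)
  have h18 := hSsymm (F y) (F z) x
  have h19 := hΩ4 z x y
  have h20 := hΩ4 z (F x) (F y)
  have h21 := hΩ4 (F z) x (F y)
  have h22 := hTsymm x y
  have h23 := hThybrid x y
  have h24 := hgsymm x y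
  have h25 := hghybrid x y
  have h26 := hThybrid x z
  have h27 := hghybrid x z
  have h28 := hTsymm x (F y)
  have h29 := hgsymm x (F y)
  have h30 := hTsymm x (F z)
  have h31 := hThybrid x (F z)
  have h32 := hgsymm x (F z)
  have h33 := hghybrid x (F z)
  have h34 := hThybrid y x
  have h35 := hghybrid y x
  have h36 := hTsymm y z
  have h37 := hThybrid y z
  have h38 := hgsymm y z
  have h39 := hghybrid y z
  have h40 := hTsymm y (F x)
  have h41 := hgsymm y (F x)
  have h42 := hTsymm y (F z)
  have h43 := hThybrid y (F z)
  have h44 := hgsymm y (F z)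
  have h45 := hghybrid y (F z)
  have h46 := hThybrid z x
  have h47 := hghybrid z x
  have h48 := hThybrid z y
  have h49 := hghybrid z y
  have h50 := hTsymm z (F x)
  simp only [hF, map_neg, LinearMap.neg_apply] at h2 h4 h5 h6 h13 h14 h20 h21 h31 h33 h43 h45
  simp only [LinearMap.smul_apply, smul_eq_mul]
  linear_combination
    ((2:ℝ)/3) * h0 +
    ((1:ℝ)/3) * h1 +
    ((-1:ℝ)/3) * h2 +
    ((-1:ℝ)/6) * h3 +
    ((-1:ℝ)/2) * h4 +
    ((-1:ℝ)/2) * h5 +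
    ((-1:ℝ)/6) * h6 +
    ((1:ℝ)/6) * h7 +
    ((1:ℝ)/6) * h8 +
    ((-1:ℝ)/2) * h9 +
    ((-1:ℝ)/3) * h10 +
    ((-1:ℝ)/6) * h11 +
    ((1:ℝ)/3) * h12 +
    ((-1:ℝ)/6) * h13 +
    ((1:ℝ)/6) * h14 +
    ((-1:ℝ)/6) * h15 +
    ((-1:ℝ)/2) * h16 +
    ((1:ℝ)/6) * h17 +
    ((1:ℝ)/3) * h18 +
    ((1:ℝ)/6) * h19 +
    ((-1:ℝ)/6) * h20 +
    ((-1:ℝ)/3) * h21 +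
    ((-2:ℝ)/3) * (ρ z) * h22 +
    ((1:ℝ)/3) * (ρ z) * h23 +
    ((-2:ℝ)/3) * (σ z) * h24 +
    ((1:ℝ)/3) * (σ z) * h25 +
    ((1:ℝ)/3) * (ρ y) * h26 +
    ((1:ℝ)/3) * (σ y) * h27 +
    ((1:ℝ)/3) * (ρ (F z)) * h28 +
    ((1:ℝ)/3) * (σ (F z)) * h29 +
    ((1:ℝ)/3) * (ρ (F y)) * h30 +
    ((2:ℝ)/3) * (ρ (F y)) * h31 +
    ((1:ℝ)/3) * (σ (F y)) * h32 +
    ((2:ℝ)/3) * (σ (F y)) * h33 +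
    ((1:ℝ)/3) * (ρ z) * h34 +
    ((1:ℝ)/3) * (σ z) * h35 +
    ((-1:ℝ)/3) * (ρ x) * h36 +
    ((1:ℝ)/3) * (ρ x) * h37 +
    ((-1:ℝ)/3) * (σ x) * h38 +
    ((1:ℝ)/3) * (σ x) * h39 +
    ((1:ℝ)/3) * (ρ (F z)) * h40 +
    ((1:ℝ)/3) * (σ (F z)) * h41 +
    ((1:ℝ)/3) * (ρ (F x)) * h42 +
    ((2:ℝ)/3) * (ρ (F x)) * h43 +
    ((1:ℝ)/3) * (σ (F x)) * h44 +
    ((2:ℝ)/3) * (σ (F x)) * h45 +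
    ((1:ℝ)/3) * (ρ y) * h46 +
    ((1:ℝ)/3) * (σ y) * h47 +
    ((1:ℝ)/3) * (ρ x) * h48 +
    ((1:ℝ)/3) * (σ x) * h49 +
    ((-1:ℝ)/3) * (ρ (F y)) * h50
end
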